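/- If the minimum cut of G is determined by two tree edges e and e' with e and e' independent in T, and this minimum cut weight is strictly smaller than the weight of every cut determined by a single tree edge, then e is cross-interested in e' and e' is cross-interested in e. -/
import Mathlib


open Finset

/-- Total weight of graph edges with one endpoint in `A` and the other in `B`
(summed over ordered pairs). -/
def betw {V : Type*} [Fintype V] (w : V → V → ℝ) (A B : Finset V) : ℝ :=
  ∑ u ∈ A, ∑ v ∈ B, w u v

/-- Weight of the cut `(S, V \\ S)`: total weight of edges leaving `S`. -/
def cutw {V : Type*} [Fintype V] [DecidableEq V] (w : V → V → ℝ) (S : Finset V) : ℝ :=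
  betw w S Sᶜ

lemma betw_union_left {V : Type*} [Fintype V] [DecidableEq V] (w : V → V → ℝ)
    (A B C : Finset V) (h : Disjoint A B) :
    betw w (A ∪ B) C = betw w A C + betw w B C := by
  simp [betw, Finset.sum_union h]

lemma betw_sdiff {V : Type*} [Fintype V] [DecidableEq V] (w : V → V → ℝ)
    (A B C : Finset V) (h : B ⊆ C) :
    betw w A (C \ B) = betw w A C - betw w A B := by
  simp only [betw, ← Finset.sum_sub_distrib]
  exact Finset.sum_congr rfl fun u _ => Finset.sum_sdiff_eq_sub h

lemma betw_comm {V : Type*} [Fintype V] (w : V → V → ℝ)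
    (hsym : ∀ u v, w u v = w v u) (A B : Finset V) :
    betw w A B = betw w B A := by
  rw [betw, Finset.sum_comm]
  simp [betw, hsym]

lemma cutw_union {V : Type*} [Fintype V] [DecidableEq V] (w : V → V → ℝ)
    (A B : Finset V) (h : Disjoint A B) :
    cutw w (A ∪ B) = (cutw w A - betw w A B) + (cutw w B - betw w B A) := by
  have hAc : B ⊆ Aᶜ := fun x hx => Finset.mem_compl.mpr (Finset.disjoint_right.mp h hx)
  have hBc : A ⊆ Bᶜ := fun x hx => Finset.mem_compl.mpr (Finset.disjoint_left.mp h hx)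
  have hc : (A ∪ B)ᶜ = Aᶜ \ B := by
    ext x; simp [Finset.mem_sdiff, not_or, and_comm]
  have hc' : (A ∪ B)ᶜ = Bᶜ \ A := by
    ext x; simp [Finset.mem_sdiff, not_or, and_comm]
  rw [cutw, betw_union_left w A B _ h]
  rw [show betw w A (A ∪ B)ᶜ = _ from by rw [hc, betw_sdiff w A B Aᶜ hAc]]
  rw [show betw w B (A ∪ B)ᶜ = _ from by rw [hc', betw_sdiff w B A Bᶜ hBc]]
  rfl

/-- If the minimum cut is determined by independent tree edges `e, e'` (disjoint
subtrees `Te, Te'`) and is strictly lighter than every cut determined by a single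
tree edge — in particular lighter than `w(Te)` and `w(Te')` — then `e` is
cross-interested in `e'` and vice versa. -/
theorem stmt_4 {V : Type*} [Fintype V] [DecidableEq V] (w : V → V → ℝ)
    (hsym : ∀ u v, w u v = w v u) (hnn : ∀ u v, 0 ≤ w u v)
    (Te Te' : Finset V) (hdisj : Disjoint Te Te')
    (hlt : cutw w (Te ∪ Te') < cutw w Te)
    (hlt' : cutw w (Te ∪ Te') < cutw w Te') :
    cutw w Te < 2 * betw w Te Te' ∧ cutw w Te' < 2 * betw w Te' Te := by
  have hu := cutw_union w Te Te' hdisj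
  have hb := betw_comm w hsym Te Te'
  constructor <;> [skip; skip] <;> nlinarith [hlt, hlt', hu, hb]
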